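/- The shell T' of a finite initial segment T contains T, has cardinality at most 2·|T|, and the number σ of its inner corners is O(log |T|) (more precisely, the widths m_{i_j} of its generators at least double at each step, so σ ≤ log₂(m_s) + 1). -/

import Mathlib

/-- The shell `T'` of a finite initial segment `T` (obtained by keeping the generators
indexed by `idx σ = 0 < ... < idx 0 = s`, where the widths at least double at each step)
contains `T`, has cardinality at most `2 |T|`, and its number of inner corners `σ`
satisfies `σ ≤ log₂ (m s) + 1`. -/
theorem stmt5 (s σ : ℕ) (hs : 0 < s) (m n : ℕ → ℕ) (idx : ℕ → ℕ)
    (T T' : Finset (ℕ × ℕ))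
    (hm0 : m 0 = 0) (hns : n s = 0)
    (hm : ∀ i < s, m i < m (i + 1)) (hn : ∀ i < s, n (i + 1) < n i)
    (hi0 : idx 0 = s) (hiσ : idx σ = 0)
    (hstep : ∀ j < σ, idx (j + 1) < idx j ∧ 2 * m (idx (j + 1)) < m (idx j) ∧
      ∀ k, idx (j + 1) < k → k < idx j → ¬ (2 * m k < m (idx j)))
    (hT : ∀ p : ℕ × ℕ, p ∈ T ↔ ∀ i ≤ s, p.1 < m i ∨ p.2 < n i)
    (hT' : ∀ p : ℕ × ℕ, p ∈ T' ↔ ∀ j ≤ σ, p.1 < m (idx j) ∨ p.2 < n (idx j)) :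
    T ⊆ T' ∧ T'.card ≤ 2 * T.card ∧ σ ≤ Nat.log 2 (m s) + 1 := by
  have hσpos : 0 < σ := by
    rcases Nat.eq_zero_or_pos σ with h | h
    · exfalso; rw [h, hi0] at hiσ; omega
    · exact h
  -- monotonicity of m and n
  have hmled : ∀ d i, i + d ≤ s → m i ≤ m (i + d) := by
    intro d
    induction d with
    | zero => intro i _; simp
    | succ d ih =>
      intro i h
      have h1 := ih (i + 1) (by omega)
      have h2 := hm i (by omega)
      have h3 : i + 1 + d = i + (d + 1) := by omega
      rw [h3] at h1
      omega
  have hmle : ∀ i i', i ≤ i' → i' ≤ s → m i ≤ m i' := by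
    intro i i' h h'
    have := hmled (i' - i) i (by omega)
    rwa [show i + (i' - i) = i' from by omega] at this
  have hnled : ∀ d i, i + d ≤ s → n (i + d) ≤ n i := by
    intro d
    induction d with
    | zero => intro i _; simp
    | succ d ih =>
      intro i h
      have h1 := ih (i + 1) (by omega)
      have h2 := hn i (by omega)
      have h3 : i + 1 + d = i + (d + 1) := by omega
      rw [h3] at h1
      omega
  have hnle : ∀ i i', i ≤ i' → i' ≤ s → n i' ≤ n i := by
    intro i i' h h'
    have := hnled (i' - i) i (by omega)
    rwa [show i + (i' - i) = i' from by omega] at this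
  -- idx j ≤ s for j ≤ σ
  have hidxle : ∀ j, j ≤ σ → idx j ≤ s := by
    intro j
    induction j with
    | zero => intro _; rw [hi0]
    | succ j ih =>
      intro h
      have h1 := (hstep j (by omega)).1
      have h2 := ih (by omega)
      omega
  -- Part 1 : T ⊆ T'
  have hsub : T ⊆ T' := by
    intro p hp
    rw [hT'] ; rw [hT] at hp
    intro j hj
    exact hp (idx j) (hidxle j hj)
  refine ⟨hsub, ?_, ?_⟩
  · -- Part 2 : cardinality
    have hkey : ∀ p ∈ T', ((p.1 / 2, p.2) : ℕ × ℕ) ∈ T := by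
      intro p hp
      rw [hT'] at hp
      rw [hT]
      intro i hi
      rcases Nat.eq_zero_or_pos i with hi0' | hipos
      · subst hi0'
        have := hp σ le_rfl
        rw [hiσ, hm0] at this
        right; omega
      · have hexists : ∃ j, j < σ ∧ idx (j + 1) < i ∧ i ≤ idx j := by
          have haux : ∀ t j, j + t = σ → i ≤ idx j →
              ∃ j', j' < σ ∧ idx (j' + 1) < i ∧ i ≤ idx j' := by
            intro t
            induction t with
            | zero =>
              intro j hj hij
              exfalso
              have : idx j = 0 := by rw [show j = σ from by omega, hiσ]
              omega
            | succ t ih =>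
              intro j hj hij
              by_cases hc : i ≤ idx (j + 1)
              · exact ih (j + 1) (by omega) hc
              · exact ⟨j, by omega, by omega, hij⟩
          exact haux σ 0 (by omega) (by rw [hi0]; exact hi)
        obtain ⟨j, hjσ, hj1, hj2⟩ := hexists
        rcases hp j (le_of_lt hjσ) with h1 | h2
        · left
          have hmi2 : m (idx j) ≤ 2 * m i := by
            rcases eq_or_lt_of_le hj2 with heq | hlt
            · rw [heq]; omega
            · exact le_of_not_gt ((hstep j hjσ).2.2 i hj1 hlt)
          omega
        · right
          have := hnle i (idx j) hj2 (hidxle j (le_of_lt hjσ))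
          omega
    have hcard : T'.card ≤ 2 * T.card := by
      apply Finset.card_le_mul_card_image_of_maps_to
        (f := fun p : ℕ × ℕ => ((p.1 / 2, p.2) : ℕ × ℕ)) hkey
      intro a _
      have hss : (T'.filter fun p : ℕ × ℕ => ((p.1 / 2, p.2) : ℕ × ℕ) = a) ⊆
          {(2 * a.1, a.2), (2 * a.1 + 1, a.2)} := by
        intro p hp
        simp only [Finset.mem_filter] at hp
        obtain ⟨-, hpa⟩ := hp
        subst hpa
        simp only [Finset.mem_insert, Finset.mem_singleton, Prod.ext_iff, Prod.mk.injEq, and_true]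
        omega
      calc (T'.filter fun p : ℕ × ℕ => ((p.1 / 2, p.2) : ℕ × ℕ) = a).card
          ≤ ({(2 * a.1, a.2), (2 * a.1 + 1, a.2)} : Finset (ℕ × ℕ)).card :=
            Finset.card_le_card hss
        _ ≤ 2 := le_trans (Finset.card_insert_le _ _) (by simp)
    exact hcard
  · -- Part 3 : σ ≤ log₂ (m s) + 1
    have hpow : ∀ d j, j + d < σ → 2 ^ d ≤ m (idx j) := by
      intro d
      induction d with
      | zero =>
        intro j hj
        have := (hstep j (by omega)).2.1
        simp only [pow_zero]
        omega
      | succ d ih =>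
        intro j hj
        have h1 := ih (j + 1) (by omega)
        have h2 := (hstep j (by omega)).2.1
        have h3 : 2 ^ (d + 1) = 2 * 2 ^ d := by ring
        omega
    have h := hpow (σ - 1) 0 (by omega)
    rw [hi0] at h
    have hms : m s ≠ 0 := by
      have : 0 < 2 ^ (σ - 1) := Nat.pow_pos (by norm_num)
      omega
    have := (Nat.le_log_iff_pow_le (by norm_num) hms).2 h
    omega
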